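/- For k odd, k ≥ 3, and n a positive multiple of k+1, there exist graphs F_1, F_2, ..., F_k on a common vertex set of size n, each of which is 1-regular, such that the simultaneous domination number of F_1, ..., F_k equals exactly (k/(k+1)) · n. -/

import Mathlib

/-- The simultaneous domination number of factors `F 0, …, F (k-1)` on a common
finite vertex set: the minimum cardinality of a set `S` that is a dominating set
in every factor. -/
noncomputable def simDomNum {V : Type*} [Fintype V] {k : ℕ}
    (F : Fin k → SimpleGraph V) : ℕ :=
  sInf {m | ∃ S : Finset V, (∀ i, ∀ v ∉ S, ∃ u ∈ S, (F i).Adj v u) ∧ S.card = m}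

section Aux

variable {k : ℕ} [NeZero k]

/-- The matching on `Option (ZMod k)`: `none` (the point at infinity) is matched with `i`,
and `a ≠ i` is matched with `2*i - a`. -/
def ggAux (i : Fin k) : Option (ZMod k) → Option (ZMod k)
  | none => some ((i : ℕ) : ZMod k)
  | some a => if a = ((i : ℕ) : ZMod k) then none else some (2 * ((i : ℕ) : ZMod k) - a)

lemma two_isUnit_aux (hkodd : Odd k) : IsUnit (2 : ZMod k) := by
  have := (ZMod.isUnit_iff_coprime 2 k).mpr (Nat.coprime_two_left.mpr hkodd)
  simpa using this

lemma ggAux_invol (i : Fin k) : Function.Involutive (ggAux i) := by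
  intro v
  cases v with
  | none => simp [ggAux]
  | some a =>
    by_cases h : a = ((i : ℕ) : ZMod k)
    · simp [ggAux, h]
    · have h' : 2 * ((i : ℕ) : ZMod k) - a ≠ ((i : ℕ) : ZMod k) := by
        intro hc
        exact h (by linear_combination -hc)
      simp only [ggAux, if_neg h, if_neg h']
      congr 1
      ring

lemma ggAux_ne (hkodd : Odd k) (i : Fin k) (v : Option (ZMod k)) : ggAux i v ≠ v := by
  cases v with
  | none => simp [ggAux]
  | some a =>
    by_cases h : a = ((i : ℕ) : ZMod k)
    · simp [ggAux, h]
    · simp only [ggAux, if_neg h, ne_eq, Option.some.injEq]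
      intro hc
      exact h ((two_isUnit_aux hkodd).mul_left_cancel (by linear_combination hc)).symm

lemma ggAux_cover (hkodd : Odd k) (v w : Option (ZMod k)) (hvw : v ≠ w) :
    ∃ i : Fin k, ggAux i v = w := by
  cases v with
  | none =>
    cases w with
    | none => exact absurd rfl hvw
    | some b =>
      refine ⟨⟨b.val, b.val_lt⟩, ?_⟩
      simp [ggAux, ZMod.natCast_rightInverse b]
  | some a =>
    cases w with
    | none =>
      refine ⟨⟨a.val, a.val_lt⟩, ?_⟩
      simp [ggAux, ZMod.natCast_rightInverse a]
    | some b =>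
      have hab : a ≠ b := by simpa using hvw
      obtain ⟨u, hu⟩ := two_isUnit_aux hkodd
      set c : ZMod k := (↑u⁻¹ : ZMod k) * (a + b) with hc
      have h2c : 2 * c = a + b := by
        rw [hc, ← hu, ← mul_assoc]
        simp
      refine ⟨⟨c.val, c.val_lt⟩, ?_⟩
      have hcast : ((c.val : ℕ) : ZMod k) = c := ZMod.natCast_rightInverse c
      have hac : a ≠ c := fun h => hab (by linear_combination h2c + 2 * h)
      simp only [ggAux, hcast, if_neg hac, Option.some.injEq]
      linear_combination h2c

end Aux

theorem stmt14 {k n : ℕ} (hkodd : Odd k) (hk : 3 ≤ k) (hn : 0 < n)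
    (hdvd : (k + 1) ∣ n) :
    ∃ F : Fin k → SimpleGraph (Fin n),
      (∀ i, ∀ v : Fin n, ((F i).neighborSet v).ncard = 1) ∧
      (simDomNum F : ℝ) = ((k : ℝ) / (k + 1)) * n := by
  haveI : NeZero k := ⟨by omega⟩
  obtain ⟨q, hq⟩ := hdvd
  have hq0 : 0 < q := by
    have : q ≠ 0 := by rintro rfl; simp at hq; omega
    omega
  have hcard : Fintype.card (Fin n) = Fintype.card (Fin q × Option (ZMod k)) := by
    simp [hq, ZMod.card, Fintype.card_option]
    ring
  let e : Fin n ≃ Fin q × Option (ZMod k) := Fintype.equivOfCardEq hcard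
  let p : Fin k → Fin n → Fin n := fun i v => e.symm ((e v).1, ggAux i (e v).2)
  have hp_e : ∀ i v, e (p i v) = ((e v).1, ggAux i (e v).2) := fun i v =>
    e.apply_symm_apply _
  have hp_invol : ∀ i, Function.Involutive (p i) := by
    intro i v
    simp only [p, Equiv.apply_symm_apply]
    rw [ggAux_invol i]
    exact e.symm_apply_apply v
  have hp_ne : ∀ i v, p i v ≠ v := by
    intro i v h
    have := congrArg e h
    rw [hp_e] at this
    have h2 : ggAux i (e v).2 = (e v).2 := congrArg Prod.snd this
    exact ggAux_ne hkodd i _ h2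
  let F : Fin k → SimpleGraph (Fin n) := fun i =>
    { Adj := fun v u => u = p i v
      symm := by
        refine ⟨fun v u h => ?_⟩
        rw [h]
        exact (hp_invol i v).symm
      loopless := ⟨fun v h => hp_ne i v h.symm⟩ }
  have hAdj : ∀ i v u, (F i).Adj v u ↔ u = p i v := fun _ _ _ => Iff.rfl
  refine ⟨F, ?_, ?_⟩
  · intro i v
    have : (F i).neighborSet v = {p i v} := by
      ext u
      simp [SimpleGraph.neighborSet, hAdj]
    rw [this, Set.ncard_singleton]
  · -- compute simDomNum F = k * q
    have hn' : n = k * q + q := by rw [hq]; ring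
    -- the explicit SD-set: all vertices whose second coordinate is not `none`
    set S0 : Finset (Fin n) :=
      Finset.image e.symm (Finset.univ ×ˢ Finset.univ.erase (none : Option (ZMod k))) with hS0
    have hmem : ∀ v, v ∈ S0 ↔ (e v).2 ≠ none := by
      intro v
      simp only [hS0, Finset.mem_image, Finset.mem_product, Finset.mem_univ, true_and,
        Finset.mem_erase, and_true]
      constructor
      · rintro ⟨x, hx, rfl⟩
        simpa using hx
      · intro h
        exact ⟨e v, h, e.symm_apply_apply v⟩
    have hcardS : S0.card = k * q := by
      rw [hS0, Finset.card_image_of_injective _ e.symm.injective, Finset.card_product,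
        Finset.card_univ, Fintype.card_fin, Finset.card_erase_of_mem (Finset.mem_univ _),
        Finset.card_univ, Fintype.card_option, ZMod.card, Nat.add_sub_cancel, Nat.mul_comm]
    have hmemset : k * q ∈
        {m | ∃ S : Finset (Fin n), (∀ i, ∀ v ∉ S, ∃ u ∈ S, (F i).Adj v u) ∧ S.card = m} := by
      refine ⟨S0, ?_, hcardS⟩
      intro i v hv
      rw [hmem] at hv
      push_neg at hv
      refine ⟨p i v, ?_, (hAdj i v _).mpr rfl⟩
      rw [hmem, hp_e, hv]
      simp [ggAux]
    have key : simDomNum F = k * q := by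
      apply le_antisymm (Nat.sInf_le hmemset)
      apply le_csInf ⟨_, hmemset⟩
      rintro m ⟨S, hdom, rfl⟩
      -- the complement has at most one vertex per block
      have hinj : Set.InjOn (fun v => (e v).1)
          ((Finset.univ \ S : Finset (Fin n)) : Set (Fin n)) := by
        intro v hv w hw h1
        by_contra hvw
        simp only [Finset.coe_sdiff, Finset.coe_univ, Set.mem_diff, Set.mem_univ,
          true_and, Finset.mem_coe] at hv hw
        have hev : e v ≠ e w := fun h => hvw (e.injective h)
        have h1' : (e v).1 = (e w).1 := h1
        have h2 : (e v).2 ≠ (e w).2 := fun h2 => hev (Prod.ext h1' h2)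
        obtain ⟨i, hi⟩ := ggAux_cover hkodd _ _ h2
        have hpw : p i v = w := by
          apply e.injective
          rw [hp_e, hi]
          exact Prod.ext h1' rfl
        obtain ⟨u, huS, hadj⟩ := hdom i v hv
        rw [hAdj, hpw] at hadj
        exact hw (hadj ▸ huS)
      have hle : (Finset.univ \ S).card ≤ q := by
        have := Finset.card_le_card_of_injOn (fun v => (e v).1)
          (fun _ _ => Finset.mem_univ _) hinj
        simpa using this
      have hsd : (Finset.univ \ S).card = n - S.card := by
        rw [Finset.card_sdiff_of_subset (Finset.subset_univ S)]
        simp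
      have hSn : S.card ≤ n := by
        have := Finset.card_le_card (Finset.subset_univ S)
        simpa using this
      omega
    rw [key, hq]
    push_cast
    have hne : (k : ℝ) + 1 ≠ 0 := by positivity
    field_simp
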